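/- Let f(x) = Σ_{i=0}^{n-1} a_i x^{q^i} be a q-polynomial over 𝔽_{q^n} regarded as 𝔽_q-linear map on 𝔽_{q^n}. Define C_f = {a f(x) + b x : a, b ∈ 𝔽_{q^n}} ⊆ End_{𝔽_q}(𝔽_{q^n}). Then every nonzero element of C_f has kernel of 𝔽_q-dimension at most 1 (equivalently C_f is an MRD-code with minimum distance n-1) if and only if U_f = {(x, f(x)) : x ∈ 𝔽_{q^n}} is a scattered 𝔽_q-subspace of 𝔽_{q^n} × 𝔽_{q^n}. -/

import Mathlib

/-- Sheekey: `C_f = {a f(x) + b x}` is an MRD-code with minimum distance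
`n-1` (all nonzero elements have kernel of dimension at most 1) iff
`U_f = {(x, f(x))}` is scattered. -/
theorem sheekey_correspondence
    (q n : ℕ) (hn : 2 ≤ n)
    (Fq K : Type*) [Field Fq] [Field K] [Fintype Fq] [Fintype K] [Algebra Fq K]
    (hq : Fintype.card Fq = q) (hK : Fintype.card K = q ^ n)
    (c : Fin n → K) (f : K →ₗ[Fq] K)
    (hf : ∀ x : K, f x = ∑ i : Fin n, c i * x ^ q ^ (i : ℕ))
    (U : Submodule Fq (K × K))
    (hU : (U : Set (K × K)) = {p | ∃ x : K, p = (x, f x)}) :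
    (∀ a b : K, ¬(a = 0 ∧ b = 0) →
        Module.finrank Fq
          (LinearMap.ker ((LinearMap.mulLeft Fq a).comp f + LinearMap.mulLeft Fq b)) ≤ 1)
      ↔
    (∀ v : K × K,
        Module.finrank Fq ↥(U ⊓ (Submodule.span K {v}).restrictScalars Fq) ≤ 1) := by
  classical
  set g : K →ₗ[Fq] K × K := LinearMap.prod LinearMap.id f with hgdef
  have hg : Function.Injective g := by
    intro x y hxy
    exact congrArg Prod.fst hxy
  have hmemU : ∀ p : K × K, p ∈ U ↔ ∃ x : K, p = (x, f x) := by
    intro p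
    constructor
    · intro hp
      have : p ∈ (U : Set (K × K)) := hp
      rw [hU] at this
      exact this
    · intro hp
      have : p ∈ ({p | ∃ x : K, p = (x, f x)} : Set (K × K)) := hp
      rw [← hU] at this
      exact this
  have key : ∀ a b : K, a ≠ 0 →
      U ⊓ (Submodule.span K {((a, -b) : K × K)}).restrictScalars Fq
        = Submodule.map g
            (LinearMap.ker ((LinearMap.mulLeft Fq a).comp f + LinearMap.mulLeft Fq b)) := by
    intro a b ha
    apply le_antisymm
    · rintro ⟨p1, p2⟩ ⟨hpU, hpS⟩
      obtain ⟨x, hx⟩ := (hmemU _).1 hpU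
      have hx1 : p1 = x := congrArg Prod.fst hx
      have hx2 : p2 = f x := congrArg Prod.snd hx
      have hpS' : ((p1, p2) : K × K) ∈ Submodule.span K {((a, -b) : K × K)} := hpS
      obtain ⟨l, hl⟩ := Submodule.mem_span_singleton.1 hpS'
      have hl1 : l * a = p1 := congrArg Prod.fst hl
      have hl2 : l * (-b) = p2 := congrArg Prod.snd hl
      refine ⟨x, ?_, ?_⟩
      · show a * f x + b * x = 0
        rw [← hx2, ← hl2, ← hx1, ← hl1]
        ring
      · show (x, f x) = (p1, p2)
        exact hx.symm
    · rintro ⟨p1, p2⟩ ⟨x, hx, hgx⟩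
      have hker : a * f x + b * x = 0 := hx
      have hfx : f x = -(b * x) / a := by
        field_simp
        linear_combination hker
      constructor
      · show ((p1, p2) : K × K) ∈ U
        rw [hmemU]
        exact ⟨x, hgx.symm⟩
      · show ((p1, p2) : K × K) ∈ Submodule.span K {((a, -b) : K × K)}
        rw [← hgx]
        refine Submodule.mem_span_singleton.2 ⟨x / a, ?_⟩
        show ((x / a) * a, (x / a) * (-b)) = (x, f x)
        rw [Prod.mk.injEq]
        constructor
        · field_simp
        · rw [hfx]
          field_simp
  constructor
  · intro hC v
    obtain ⟨v1, v2⟩ := v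
    by_cases hv1 : v1 = 0
    · have hbot : U ⊓ (Submodule.span K {((v1, v2) : K × K)}).restrictScalars Fq = ⊥ := by
        rw [eq_bot_iff]
        rintro ⟨p1, p2⟩ ⟨hpU, hpS⟩
        obtain ⟨x, hx⟩ := (hmemU _).1 hpU
        obtain ⟨l, hl⟩ := Submodule.mem_span_singleton.1 (hpS : ((p1,p2) : K × K) ∈ Submodule.span K {((v1, v2) : K × K)})
        have hl1 : l * v1 = p1 := congrArg Prod.fst hl
        have hp1 : p1 = 0 := by rw [← hl1, hv1, mul_zero]
        have hx1 : p1 = x := congrArg Prod.fst hx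
        have hx2 : p2 = f x := congrArg Prod.snd hx
        have hp2 : p2 = 0 := by rw [hx2, ← hx1, hp1, map_zero]
        simp [hp1, hp2, Submodule.mem_bot]
      rw [hbot]
      simp
    · have hkey := key v1 (-v2) hv1
      rw [neg_neg] at hkey
      rw [hkey]
      have := LinearEquiv.finrank_eq
        ((LinearMap.ker ((LinearMap.mulLeft Fq v1).comp f + LinearMap.mulLeft Fq (-v2))).equivMapOfInjective g hg)
      rw [← this]
      exact hC v1 (-v2) (fun h => hv1 h.1)
  · intro hS a b hab
    by_cases ha : a = 0
    · have hb : b ≠ 0 := fun hb => hab ⟨ha, hb⟩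
      have hbot : LinearMap.ker ((LinearMap.mulLeft Fq a).comp f + LinearMap.mulLeft Fq b) = ⊥ := by
        rw [eq_bot_iff]
        intro x hx
        have hker : a * f x + b * x = 0 := hx
        rw [ha, zero_mul, zero_add] at hker
        have : x = 0 := by
          rcases mul_eq_zero.1 hker with h | h
          · exact absurd h hb
          · exact h
        simp [this, Submodule.mem_bot]
      rw [hbot]
      simp
    · have hkey := key a b ha
      have := LinearEquiv.finrank_eq
        ((LinearMap.ker ((LinearMap.mulLeft Fq a).comp f + LinearMap.mulLeft Fq b)).equivMapOfInjective g hg)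
      rw [this, ← hkey]
      exact hS (a, -b)
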